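/- arXiv:cs/0207090 — 3 statements merged into one kernel-verified Lean document; each statement's English description precedes it below -/
import Mathlib

section
/- Let Γ = {p, ~p∨s, r⊃t, ~p∨q, ~q}, where p, q, r, s, t are distinct propositional variables. Then Dab({p ∧ ~p, q ∧ ~q}) is a minimal Dab-consequence of Γ, U(Γ) = {p ∧ ~p, q ∧ ~q}, and there is no finite Δ ⊆ Ω with Δ ∩ U(Γ) = ∅ and Γ ⊢_CLuN s ∨ Dab(Δ); hence s is not finally ACLuN1-derivable from Γ. -/
/-- Propositional formulas: variables, ⊥, ⊃, ∧, ∨, ≡, and paraconsistent negation ~. -/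
inductive Formula : Type
  | var : ℕ → Formula
  | bot : Formula
  | imp : Formula → Formula → Formula
  | conj : Formula → Formula → Formula
  | disj : Formula → Formula → Formula
  | equiv : Formula → Formula → Formula
  | pneg : Formula → Formula
  deriving DecidableEq

namespace Formula

/-- Classical negation: ¬A := A ⊃ ⊥. -/
def neg (A : Formula) : Formula := imp A bot

end Formula

/-- Hilbert-style derivability. `cl = false` gives CLuN (full positive classical logic,
including Peirce's law, plus ⊥ ⊃ A and A ∨ ~A, with modus ponens as only rule);
`cl = true` additionally has the axiom schema (A ∧ ~A) ⊃ B, giving CL. -/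
inductive Deriv (cl : Bool) (Γ : Set Formula) : Formula → Prop
  | prem {A : Formula} : A ∈ Γ → Deriv cl Γ A
  | axK (A B : Formula) : Deriv cl Γ (A.imp (B.imp A))
  | axS (A B C : Formula) : Deriv cl Γ ((A.imp (B.imp C)).imp ((A.imp B).imp (A.imp C)))
  | axPeirce (A B : Formula) : Deriv cl Γ (((A.imp B).imp A).imp A)
  | axAndElimL (A B : Formula) : Deriv cl Γ ((A.conj B).imp A)
  | axAndElimR (A B : Formula) : Deriv cl Γ ((A.conj B).imp B)
  | axAndIntro (A B : Formula) : Deriv cl Γ (A.imp (B.imp (A.conj B)))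
  | axOrIntroL (A B : Formula) : Deriv cl Γ (A.imp (A.disj B))
  | axOrIntroR (A B : Formula) : Deriv cl Γ (B.imp (A.disj B))
  | axOrElim (A B C : Formula) : Deriv cl Γ ((A.imp C).imp ((B.imp C).imp ((A.disj B).imp C)))
  | axIffElimL (A B : Formula) : Deriv cl Γ ((A.equiv B).imp (A.imp B))
  | axIffElimR (A B : Formula) : Deriv cl Γ ((A.equiv B).imp (B.imp A))
  | axIffIntro (A B : Formula) : Deriv cl Γ ((A.imp B).imp ((B.imp A).imp (A.equiv B)))
  | axBot (A : Formula) : Deriv cl Γ (Formula.bot.imp A)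
  | axEM (A : Formula) : Deriv cl Γ (A.disj A.pneg)
  | axCL (A B : Formula) : cl = true → Deriv cl Γ ((A.conj A.pneg).imp B)
  | mp {A B : Formula} : Deriv cl Γ (A.imp B) → Deriv cl Γ A → Deriv cl Γ B

/-- Γ ⊢_CLuN A -/
def CLuN (Γ : Set Formula) (A : Formula) : Prop := Deriv false Γ A

/-- Γ ⊢_CL A -/
def CL (Γ : Set Formula) (A : Formula) : Prop := Deriv true Γ A

/-- The set of abnormalities Ω: all formulas of the form A ∧ ~A. -/
def Omega : Set Formula := {F | ∃ A : Formula, F = A.conj A.pneg}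

/-- An arbitrary (noncomputable) linear order on formulas, used only to pick a canonical
ordering of the disjuncts of a Dab-formula. -/
noncomputable instance : LinearOrder Formula :=
  @linearOrderOfSTO Formula WellOrderingRel _ (Classical.decRel _)

/-- Disjunction of a list of formulas; the empty disjunction is ⊥. -/
def listDisj : List Formula → Formula
  | [] => Formula.bot
  | [A] => A
  | A :: B :: rest => A.disj (listDisj (B :: rest))

/-- Dab(Δ): the disjunction of the members of the finite set Δ (by convention Dab(∅) := ⊥). -/
noncomputable def Dab (Δ : Finset Formula) : Formula := listDisj (Δ.sort (· ≤ ·))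

/-- Dab(Δ) is a minimal Dab-consequence of Γ: Δ is finite and nonempty, Δ ⊆ Ω,
Γ ⊢_CLuN Dab(Δ), and no nonempty Δ' ⊊ Δ has Γ ⊢_CLuN Dab(Δ'). -/
def MinDabConsequence (Γ : Set Formula) (Δ : Finset Formula) : Prop :=
  Δ.Nonempty ∧ ↑Δ ⊆ Omega ∧ CLuN Γ (Dab Δ) ∧
    ∀ Δ' : Finset Formula, Δ'.Nonempty → Δ' ⊂ Δ → ¬ CLuN Γ (Dab Δ')

/-- U(Γ): the set of formulas unreliable with respect to Γ. -/
def U (Γ : Set Formula) : Set Formula :=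
  {A | ∃ Δ : Finset Formula, MinDabConsequence Γ Δ ∧ A ∈ Δ}

/-- A is finally ACLuN1-derivable from Γ iff there is a finite Δ ⊆ Ω (possibly empty)
such that Γ ⊢_CLuN A ∨ Dab(Δ) and Δ ∩ U(Γ) = ∅. -/
def FinallyDerivable (Γ : Set Formula) (A : Formula) : Prop :=
  ∃ Δ : Finset Formula, ↑Δ ⊆ Omega ∧ CLuN Γ (A.disj (Dab Δ)) ∧
    (↑Δ ∩ U Γ : Set Formula) = ∅

/-- Γ = {p, ~p∨s, r⊃t, ~p∨q, ~q}. -/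
def Gamma2 (p q r s t : ℕ) : Set Formula :=
  {Formula.var p,
   (Formula.var p).pneg.disj (Formula.var s),
   (Formula.var r).imp (Formula.var t),
   (Formula.var p).pneg.disj (Formula.var q),
   (Formula.var q).pneg}

/-! ### Auxiliary machinery -/

/-- CLuN semantics: a valuation of variables `v` and a free choice `g` for the value of
each paraconsistent negation (the negation `~A` is true iff `A` is false or `g A` holds). -/
def evalF (v : ℕ → Bool) (g : Formula → Bool) : Formula → Bool
  | Formula.var n => v n
  | Formula.bot => false
  | Formula.imp A B => !evalF v g A || evalF v g B
  | Formula.conj A B => evalF v g A && evalF v g B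
  | Formula.disj A B => evalF v g A || evalF v g B
  | Formula.equiv A B => evalF v g A == evalF v g B
  | Formula.pneg A => !evalF v g A || g A

theorem sound {Γ : Set Formula} {A : Formula} (h : Deriv false Γ A)
    (v : ℕ → Bool) (g : Formula → Bool) (hΓ : ∀ B ∈ Γ, evalF v g B = true) :
    evalF v g A = true := by
  induction h with
  | prem hB => exact hΓ _ hB
  | axK A B => simp only [evalF]; cases evalF v g A <;> cases evalF v g B <;> rfl
  | axS A B C =>
      simp only [evalF]
      cases evalF v g A <;> cases evalF v g B <;> cases evalF v g C <;> rfl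
  | axPeirce A B => simp only [evalF]; cases evalF v g A <;> cases evalF v g B <;> rfl
  | axAndElimL A B => simp only [evalF]; cases evalF v g A <;> cases evalF v g B <;> rfl
  | axAndElimR A B => simp only [evalF]; cases evalF v g A <;> cases evalF v g B <;> rfl
  | axAndIntro A B => simp only [evalF]; cases evalF v g A <;> cases evalF v g B <;> rfl
  | axOrIntroL A B => simp only [evalF]; cases evalF v g A <;> cases evalF v g B <;> rfl
  | axOrIntroR A B => simp only [evalF]; cases evalF v g A <;> cases evalF v g B <;> rfl
  | axOrElim A B C =>
      simp only [evalF]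
      cases evalF v g A <;> cases evalF v g B <;> cases evalF v g C <;> rfl
  | axIffElimL A B => simp only [evalF]; cases evalF v g A <;> cases evalF v g B <;> rfl
  | axIffElimR A B => simp only [evalF]; cases evalF v g A <;> cases evalF v g B <;> rfl
  | axIffIntro A B => simp only [evalF]; cases evalF v g A <;> cases evalF v g B <;> rfl
  | axBot A => simp only [evalF]; rfl
  | axEM A => simp only [evalF]; cases evalF v g A <;> cases g A <;> rfl
  | axCL A B hcl => exact absurd hcl (by simp)
  | mp h1 h2 ih1 ih2 =>
      simp only [evalF] at ih1
      rw [ih2] at ih1; simpa using ih1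

theorem evalF_listDisj {v g} {l : List Formula} (h : evalF v g (listDisj l) = true) :
    ∃ A ∈ l, evalF v g A = true := by
  induction l with
  | nil => simp [listDisj, evalF] at h
  | cons a l ih =>
      cases l with
      | nil => exact ⟨a, by simp, h⟩
      | cons b l' =>
          simp only [listDisj, evalF, Bool.or_eq_true] at h
          rcases h with h | h
          · exact ⟨a, by simp, h⟩
          · obtain ⟨A, hA, hA2⟩ := ih h
            exact ⟨A, by simp [List.mem_cons] at hA ⊢; tauto, hA2⟩

theorem evalF_Dab {v g} {Δ : Finset Formula} (h : evalF v g (Dab Δ) = true) :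
    ∃ A ∈ Δ, evalF v g A = true := by
  obtain ⟨A, hA, h2⟩ := evalF_listDisj (l := Δ.sort (· ≤ ·)) h
  exact ⟨A, (Finset.mem_sort _).1 hA, h2⟩

/-- composition of implications -/
theorem Deriv.comp {cl Γ} {A B C : Formula} (h1 : Deriv cl Γ (A.imp B))
    (h2 : Deriv cl Γ (B.imp C)) : Deriv cl Γ (A.imp C) :=
  Deriv.mp (Deriv.mp (Deriv.axS A B C) (Deriv.mp (Deriv.axK (B.imp C) A) h2)) h1

theorem Deriv.disj_comm {cl Γ} {A B : Formula} (h : Deriv cl Γ (A.disj B)) :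
    Deriv cl Γ (B.disj A) :=
  Deriv.mp (Deriv.mp (Deriv.mp (Deriv.axOrElim A B (B.disj A))
    (Deriv.axOrIntroR B A)) (Deriv.axOrIntroL B A)) h

theorem Dab_singleton (a : Formula) : Dab {a} = a := by
  simp [Dab, Finset.sort_singleton, listDisj]

theorem Dab_pair {a b : Formula} (hab : a ≠ b) :
    Dab {a, b} = a.disj b ∨ Dab {a, b} = b.disj a := by
  have hnd := Finset.sort_nodup ({a, b} : Finset Formula) (· ≤ ·)
  have hlen : (Finset.sort ({a, b} : Finset Formula) (· ≤ ·)).length = 2 := by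
    rw [Finset.length_sort, Finset.card_insert_of_notMem (by simp [hab]),
      Finset.card_singleton]
  have hmem : ∀ x ∈ Finset.sort ({a, b} : Finset Formula) (· ≤ ·), x = a ∨ x = b := by
    intro x hx
    simpa using (Finset.mem_sort _).1 hx
  obtain ⟨x, y, hxy⟩ := List.length_eq_two.1 hlen
  rw [hxy] at hnd hmem
  have hx := hmem x (by simp)
  have hy := hmem y (by simp)
  have hne : x ≠ y := by simp at hnd; exact hnd
  unfold Dab
  rw [hxy]
  rcases hx with rfl | rfl <;> rcases hy with rfl | rfl <;>
    first
      | exact absurd rfl hne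
      | exact Or.inl rfl
      | exact Or.inr rfl

theorem subset_pair {a b : Formula} {Δ : Finset Formula} (hne : Δ.Nonempty)
    (hss : Δ ⊂ {a, b}) : Δ = {a} ∨ Δ = {b} := by
  have hsub := hss.1
  by_cases ha : a ∈ Δ
  · left
    by_cases hb : b ∈ Δ
    · exfalso
      exact hss.2 (fun x hx => by simp at hx; rcases hx with rfl | rfl <;> assumption)
    · apply Finset.Subset.antisymm _ (by simpa using ha)
      intro x hx
      have := hsub hx
      simp at this ⊢
      rcases this with rfl | rfl
      · rfl
      · exact absurd hx hb
  · rcases (Finset.subset_singleton_iff.1 (fun x hx => by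
      have := hsub hx; simp at this ⊢
      rcases this with rfl | rfl
      · exact absurd hx ha
      · rfl)) with h | h
    · exact absurd h (Finset.nonempty_iff_ne_empty.1 hne)
    · exact Or.inr h

/-- For pairwise distinct p, q, r, s, t: Dab({p∧~p, q∧~q}) is a minimal Dab-consequence
of Γ, U(Γ) = {p∧~p, q∧~q}, and there is no finite Δ ⊆ Ω with Δ ∩ U(Γ) = ∅ and
Γ ⊢_CLuN s ∨ Dab(Δ); hence s is not finally ACLuN1-derivable from Γ. -/
theorem example3_analysis (p q r s t : ℕ)
    (hpq : p ≠ q) (hpr : p ≠ r) (hps : p ≠ s) (hpt : p ≠ t) (hqr : q ≠ r)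
    (hqs : q ≠ s) (hqt : q ≠ t) (hrs : r ≠ s) (hrt : r ≠ t) (hst : s ≠ t) :
    MinDabConsequence (Gamma2 p q r s t)
      {(Formula.var p).conj (Formula.var p).pneg,
       (Formula.var q).conj (Formula.var q).pneg} ∧
    U (Gamma2 p q r s t) =
      {(Formula.var p).conj (Formula.var p).pneg,
       (Formula.var q).conj (Formula.var q).pneg} ∧
    ¬ (∃ Δ : Finset Formula, ↑Δ ⊆ Omega ∧
        (↑Δ ∩ U (Gamma2 p q r s t) : Set Formula) = ∅ ∧
        CLuN (Gamma2 p q r s t) ((Formula.var s).disj (Dab Δ))) ∧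
    ¬ FinallyDerivable (Gamma2 p q r s t) (Formula.var s) := by
  
  -- abbreviations
  set P := Formula.var p with hP
  set Q := Formula.var q with hQ
  set Γ := Gamma2 p q r s t with hΓdef
  set pp := P.conj P.pneg with hpp
  set qq := Q.conj Q.pneg with hqq
  have hPQ : P ≠ Q := by simp [hP, hQ, hpq]
  have hppqq : pp ≠ qq := by simp [hpp, hqq, hP, hQ, hpq]
  -- premises
  have hprem_p : Deriv false Γ P := Deriv.prem (by simp [hΓdef, Gamma2, hP])
  have hprem_pq : Deriv false Γ (P.pneg.disj Q) :=
    Deriv.prem (by simp [hΓdef, Gamma2, hP, hQ])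
  have hprem_nq : Deriv false Γ Q.pneg := Deriv.prem (by simp [hΓdef, Gamma2, hQ])
  -- syntactic derivation of pp ∨ qq
  have h1 : Deriv false Γ (P.pneg.imp (pp.disj qq)) :=
    Deriv.comp (Deriv.mp (Deriv.axAndIntro P P.pneg) hprem_p) (Deriv.axOrIntroL pp qq)
  have hq_nq : Deriv false Γ (Q.imp Q.pneg) := Deriv.mp (Deriv.axK Q.pneg Q) hprem_nq
  have h2a : Deriv false Γ (Q.imp qq) :=
    Deriv.mp (Deriv.mp (Deriv.axS Q Q.pneg qq) (Deriv.axAndIntro Q Q.pneg)) hq_nq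
  have h2 : Deriv false Γ (Q.imp (pp.disj qq)) := Deriv.comp h2a (Deriv.axOrIntroR pp qq)
  have hder : Deriv false Γ (pp.disj qq) :=
    Deriv.mp (Deriv.mp (Deriv.mp (Deriv.axOrElim P.pneg Q (pp.disj qq)) h1) h2) hprem_pq
  have hDab : CLuN Γ (Dab {pp, qq}) := by
    rcases Dab_pair hppqq with h | h
    · rw [h]; exact hder
    · rw [h]; exact hder.disj_comm
  -- Model 1: refutes pp; only true abnormality is qq
  set v1 : ℕ → Bool := fun _ => true with hv1
  set g1 : Formula → Bool := fun A => decide (A = Q) with hg1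
  have hM1 : ∀ B ∈ Γ, evalF v1 g1 B = true := by
    intro B hB
    simp only [hΓdef, Gamma2, Set.mem_insert_iff, Set.mem_singleton_iff] at hB
    rcases hB with rfl | rfl | rfl | rfl | rfl <;> simp [evalF, hv1, hg1, hP, hQ]
  have habn1 : ∀ A ∈ Omega, evalF v1 g1 A = true → A = qq := by
    rintro A ⟨C, rfl⟩ ht
    simp only [evalF, Bool.and_eq_true, Bool.or_eq_true, Bool.not_eq_true',
      decide_eq_true_eq, hg1] at ht
    obtain ⟨htC, h⟩ := ht
    rcases h with h | rfl
    · rw [htC] at h; exact absurd h (by simp)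
    · rfl
  -- Model 2: refutes qq; only true abnormality is pp
  set v2 : ℕ → Bool := fun n => decide (n ≠ q) with hv2
  set g2 : Formula → Bool := fun A => decide (A = P) with hg2
  have hM2 : ∀ B ∈ Γ, evalF v2 g2 B = true := by
    intro B hB
    simp only [hΓdef, Gamma2, Set.mem_insert_iff, Set.mem_singleton_iff] at hB
    rcases hB with rfl | rfl | rfl | rfl | rfl <;>
      simp [evalF, hv2, hg2, hP, hQ, hpq, hqr.symm, hqt.symm]
  have habn2 : ∀ A ∈ Omega, evalF v2 g2 A = true → A = pp := by
    rintro A ⟨C, rfl⟩ ht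
    simp only [evalF, Bool.and_eq_true, Bool.or_eq_true, Bool.not_eq_true',
      decide_eq_true_eq, hg2] at ht
    obtain ⟨htC, h⟩ := ht
    rcases h with h | rfl
    · rw [htC] at h; exact absurd h (by simp)
    · rfl
  -- Model 3: refutes s; only true abnormality is pp
  set v3 : ℕ → Bool := fun n => decide (n = p) with hv3
  set g3 : Formula → Bool := fun A => decide (A = P) with hg3
  have hM3 : ∀ B ∈ Γ, evalF v3 g3 B = true := by
    intro B hB
    simp only [hΓdef, Gamma2, Set.mem_insert_iff, Set.mem_singleton_iff] at hB
    rcases hB with rfl | rfl | rfl | rfl | rfl <;>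
      simp [evalF, hv3, hg3, hP, hQ, hpq.symm, hpr.symm]
  have habn3 : ∀ A ∈ Omega, evalF v3 g3 A = true → A = pp := by
    rintro A ⟨C, rfl⟩ ht
    simp only [evalF, Bool.and_eq_true, Bool.or_eq_true, Bool.not_eq_true',
      decide_eq_true_eq, hg3] at ht
    obtain ⟨htC, h⟩ := ht
    rcases h with h | rfl
    · rw [htC] at h; exact absurd h (by simp)
    · rfl
  have hΩsub : ↑({pp, qq} : Finset Formula) ⊆ Omega := by
    intro x hx
    simp only [Finset.coe_insert, Finset.coe_singleton, Set.mem_insert_iff,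
      Set.mem_singleton_iff] at hx
    rcases hx with rfl | rfl
    · exact ⟨P, rfl⟩
    · exact ⟨Q, rfl⟩
  have hMin : MinDabConsequence Γ {pp, qq} := by
    refine ⟨⟨pp, by simp⟩, hΩsub, hDab, ?_⟩
    intro Δ' hne hss hCL
    rcases subset_pair hne hss with rfl | rfl
    · have := sound hCL v1 g1 hM1
      rw [Dab_singleton] at this
      simp [evalF, hv1, hg1, hpp, hP, hQ, hpq] at this
    · have := sound hCL v2 g2 hM2
      rw [Dab_singleton] at this
      simp [evalF, hv2, hg2, hqq, hQ] at this
  have hUeq : U Γ = {pp, qq} := by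
    ext A
    constructor
    · rintro ⟨Δ, ⟨hne, hΩ, hd, hmin⟩, hA⟩
      have hqqΔ : qq ∈ Δ := by
        obtain ⟨B, hB, hBt⟩ := evalF_Dab (sound hd v1 g1 hM1)
        have := habn1 B (hΩ (Finset.mem_coe.2 hB)) hBt
        rwa [this] at hB
      have hppΔ : pp ∈ Δ := by
        obtain ⟨B, hB, hBt⟩ := evalF_Dab (sound hd v2 g2 hM2)
        have := habn2 B (hΩ (Finset.mem_coe.2 hB)) hBt
        rwa [this] at hB
      have hsub : ({pp, qq} : Finset Formula) ⊆ Δ := by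
        intro x hx; simp at hx; rcases hx with rfl | rfl <;> assumption
      by_cases heq : Δ = {pp, qq}
      · rw [heq] at hA; simpa using hA
      · exact absurd hDab (hmin {pp, qq} ⟨pp, by simp⟩
          (Finset.ssubset_iff_subset_ne.2 ⟨hsub, fun h => heq h.symm⟩))
    · intro hA
      simp only [Set.mem_insert_iff, Set.mem_singleton_iff] at hA
      exact ⟨{pp, qq}, hMin, by rcases hA with rfl | rfl <;> simp⟩
  have h3 : ¬ (∃ Δ : Finset Formula, ↑Δ ⊆ Omega ∧
      (↑Δ ∩ U Γ : Set Formula) = ∅ ∧ CLuN Γ ((Formula.var s).disj (Dab Δ))) := by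
    rintro ⟨Δ, hΩ, hUempty, hd⟩
    have hppU : pp ∈ U Γ := by rw [hUeq]; simp
    have hppΔ : pp ∉ Δ := by
      intro h
      exact Set.eq_empty_iff_forall_notMem.1 hUempty pp ⟨Finset.mem_coe.2 h, hppU⟩
    have hs := sound hd v3 g3 hM3
    simp only [evalF, Bool.or_eq_true] at hs
    rcases hs with hs | hs
    · simp [hv3, hps.symm] at hs
    · obtain ⟨B, hB, hBt⟩ := evalF_Dab hs
      have := habn3 B (hΩ (Finset.mem_coe.2 hB)) hBt
      rw [this] at hB
      exact hppΔ hB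
  refine ⟨hMin, hUeq, h3, ?_⟩
  rintro ⟨Δ, hΩ, hd, hU⟩
  exact h3 ⟨Δ, hΩ, hU, hd⟩
end

section
/- Soundness of the rule IC: for every set of propositional formulas Γ and all finite Λ, Λ', Θ ⊆ Ω with Λ ∪ Λ' nonempty, if Γ ⊢_CLuN Dab(Λ ∪ Λ') ∨ Dab(Θ ∪ Λ') then Γ ⊢_CLuN Dab(Λ ∪ Λ') ∨ Dab(Θ); in particular, if Γ ⊢_CLuN Dab(Λ ∪ Λ') ∨ Dab(Λ') then Γ ⊢_CLuN Dab(Λ ∪ Λ'). -/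
section Aux

variable {cl : Bool} {Γ : Set Formula}

lemma imp_refl (A : Formula) : Deriv cl Γ (A.imp A) :=
  Deriv.mp (Deriv.mp (Deriv.axS A (A.imp A) A) (Deriv.axK A (A.imp A))) (Deriv.axK A A)

lemma imp_trans {A B C : Formula} (hab : Deriv cl Γ (A.imp B))
    (hbc : Deriv cl Γ (B.imp C)) : Deriv cl Γ (A.imp C) :=
  Deriv.mp (Deriv.mp (Deriv.axS A B C) (Deriv.mp (Deriv.axK (B.imp C) A) hbc)) hab

lemma listDisj_imp {C : Formula} : ∀ {l : List Formula},
    (∀ A ∈ l, Deriv cl Γ (A.imp C)) → Deriv cl Γ ((listDisj l).imp C)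
  | [], _ => Deriv.axBot C
  | [A], h => h A (by simp)
  | A :: B :: rest, h => by
    have ih : Deriv cl Γ ((listDisj (B :: rest)).imp C) :=
      listDisj_imp (fun X hX => h X (by simp_all))
    exact Deriv.mp (Deriv.mp (Deriv.axOrElim A (listDisj (B :: rest)) C)
      (h A (by simp))) ih

lemma mem_imp_listDisj {A : Formula} : ∀ {l : List Formula},
    A ∈ l → Deriv cl Γ (A.imp (listDisj l))
  | [], h => by simp at h
  | [B], h => by
    simp at h; subst h; exact imp_refl A
  | B :: C :: rest, h => by
    rcases List.mem_cons.mp h with h | h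
    · subst h; exact Deriv.axOrIntroL A (listDisj (C :: rest))
    · exact imp_trans (mem_imp_listDisj h) (Deriv.axOrIntroR B (listDisj (C :: rest)))

lemma dab_imp {Δ : Finset Formula} {C : Formula}
    (h : ∀ A ∈ Δ, Deriv cl Γ (A.imp C)) : Deriv cl Γ ((Dab Δ).imp C) :=
  listDisj_imp (fun A hA => h A ((Finset.mem_sort _).mp hA))

lemma mem_imp_dab {Δ : Finset Formula} {A : Formula} (h : A ∈ Δ) :
    Deriv cl Γ (A.imp (Dab Δ)) :=
  mem_imp_listDisj ((Finset.mem_sort _).mpr h)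

lemma dab_mono {Δ Δ' : Finset Formula} (h : Δ ⊆ Δ') :
    Deriv cl Γ ((Dab Δ).imp (Dab Δ')) :=
  dab_imp (fun A hA => mem_imp_dab (h hA))

end Aux

/-- Soundness of IC: if Γ ⊢_CLuN Dab(Λ ∪ Λ') ∨ Dab(Θ ∪ Λ') then
Γ ⊢_CLuN Dab(Λ ∪ Λ') ∨ Dab(Θ); in particular, if Γ ⊢_CLuN Dab(Λ ∪ Λ') ∨ Dab(Λ') then
Γ ⊢_CLuN Dab(Λ ∪ Λ'). -/
theorem ic_sound (Γ : Set Formula) (Λ Λ' Θ : Finset Formula)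
    (hΛ : ↑Λ ⊆ Omega) (hΛ' : ↑Λ' ⊆ Omega) (hΘ : ↑Θ ⊆ Omega)
    (hne : (Λ ∪ Λ').Nonempty) :
    (CLuN Γ ((Dab (Λ ∪ Λ')).disj (Dab (Θ ∪ Λ'))) →
      CLuN Γ ((Dab (Λ ∪ Λ')).disj (Dab Θ))) ∧
    (CLuN Γ ((Dab (Λ ∪ Λ')).disj (Dab Λ')) → CLuN Γ (Dab (Λ ∪ Λ'))) := by
  set X := Dab (Λ ∪ Λ')
  constructor
  · intro h
    -- Dab(Θ ∪ Λ') ⊃ X ∨ Dab Θ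
    have h2 : Deriv false Γ ((Dab (Θ ∪ Λ')).imp (X.disj (Dab Θ))) := by
      apply dab_imp
      intro A hA
      rcases Finset.mem_union.mp hA with hA | hA
      · exact imp_trans (mem_imp_dab hA) (Deriv.axOrIntroR X (Dab Θ))
      · exact imp_trans (mem_imp_dab (Finset.mem_union_right Λ hA))
          (Deriv.axOrIntroL X (Dab Θ))
    have h1 : Deriv false Γ (X.imp (X.disj (Dab Θ))) := Deriv.axOrIntroL X (Dab Θ)
    exact Deriv.mp (Deriv.mp (Deriv.mp
      (Deriv.axOrElim X (Dab (Θ ∪ Λ')) (X.disj (Dab Θ))) h1) h2) h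
  · intro h
    have h2 : Deriv false Γ ((Dab Λ').imp X) := dab_mono Finset.subset_union_right
    exact Deriv.mp (Deriv.mp (Deriv.mp
      (Deriv.axOrElim X (Dab Λ') X) (imp_refl X)) h2) h
end

section
/- Soundness of the goal-directed proof system for ACLuN1: for every set of propositional formulas Γ and every formula G, if a line A_{Δ,Θ} (formula A, D-condition Δ, A-condition Θ) occurs in a goal-directed proof from Γ with main goal G, then Γ ∪ Δ ⊢_CLuN A ∨ Dab(Θ). -/
/-- The lines A_{Δ,Θ} (formula A, D-condition Δ, A-condition Θ) that may occur in a
goal-directed proof from Γ with main goal G. -/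
inductive GD (Γ : Set Formula) (G : Formula) :
    Formula → Finset Formula → Finset Formula → Prop
  | prem {A : Formula} : A ∈ Γ → GD Γ G A ∅ ∅
  | goal : GD Γ G G {G} ∅
  | agoal {Δ : Finset Formula} : Δ.Nonempty → ↑Δ ⊆ Omega → GD Γ G (Dab Δ) {Dab Δ} ∅
  | efq {A : Formula} : A ∈ Γ → GD Γ G G {A.neg} ∅
  -- formula analysing rules
  | impE1 {A B : Formula} {Δ Θ : Finset Formula} :
      GD Γ G (A.imp B) Δ Θ → GD Γ G B (Δ ∪ {A}) Θ
  | impE2 {A B : Formula} {Δ Θ : Finset Formula} :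
      GD Γ G (A.imp B) Δ Θ → GD Γ G A.neg (Δ ∪ {B.neg}) Θ
  | negImpE1 {A B : Formula} {Δ Θ : Finset Formula} :
      GD Γ G (A.imp B).neg Δ Θ → GD Γ G A Δ Θ
  | negImpE2 {A B : Formula} {Δ Θ : Finset Formula} :
      GD Γ G (A.imp B).neg Δ Θ → GD Γ G B.neg Δ Θ
  | disjE1 {A B : Formula} {Δ Θ : Finset Formula} :
      GD Γ G (A.disj B) Δ Θ → GD Γ G A (Δ ∪ {B.neg}) Θ
  | disjE2 {A B : Formula} {Δ Θ : Finset Formula} :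
      GD Γ G (A.disj B) Δ Θ → GD Γ G B (Δ ∪ {A.neg}) Θ
  | negDisjE1 {A B : Formula} {Δ Θ : Finset Formula} :
      GD Γ G (A.disj B).neg Δ Θ → GD Γ G A.neg Δ Θ
  | negDisjE2 {A B : Formula} {Δ Θ : Finset Formula} :
      GD Γ G (A.disj B).neg Δ Θ → GD Γ G B.neg Δ Θ
  | conjE1 {A B : Formula} {Δ Θ : Finset Formula} :
      GD Γ G (A.conj B) Δ Θ → GD Γ G A Δ Θ
  | conjE2 {A B : Formula} {Δ Θ : Finset Formula} :
      GD Γ G (A.conj B) Δ Θ → GD Γ G B Δ Θ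
  | negConjE {A B : Formula} {Δ Θ : Finset Formula} :
      GD Γ G (A.conj B).neg Δ Θ → GD Γ G (A.neg.disj B.neg) Δ Θ
  | equivE1 {A B : Formula} {Δ Θ : Finset Formula} :
      GD Γ G (A.equiv B) Δ Θ → GD Γ G (A.imp B) Δ Θ
  | equivE2 {A B : Formula} {Δ Θ : Finset Formula} :
      GD Γ G (A.equiv B) Δ Θ → GD Γ G (B.imp A) Δ Θ
  | negEquivE1 {A B : Formula} {Δ Θ : Finset Formula} :
      GD Γ G (A.equiv B).neg Δ Θ → GD Γ G (A.disj B) Δ Θ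
  | negEquivE2 {A B : Formula} {Δ Θ : Finset Formula} :
      GD Γ G (A.equiv B).neg Δ Θ → GD Γ G (A.neg.disj B.neg) Δ Θ
  | pnegE {A : Formula} {Δ Θ : Finset Formula} :
      GD Γ G A.pneg Δ Θ → GD Γ G A.neg Δ (Θ ∪ {A.conj A.pneg})
  | negPnegE {A : Formula} {Δ Θ : Finset Formula} :
      GD Γ G A.pneg.neg Δ Θ → GD Γ G A Δ Θ
  | negNegE {A : Formula} {Δ Θ : Finset Formula} :
      GD Γ G A.neg.neg Δ Θ → GD Γ G A Δ Θ
  -- condition analysing rules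
  | cImpE1 {A B C : Formula} {Δ Θ : Finset Formula} :
      GD Γ G A (Δ ∪ {B.imp C}) Θ → GD Γ G A (Δ ∪ {B.neg}) Θ
  | cImpE2 {A B C : Formula} {Δ Θ : Finset Formula} :
      GD Γ G A (Δ ∪ {B.imp C}) Θ → GD Γ G A (Δ ∪ {C}) Θ
  | cNegImpE {A B C : Formula} {Δ Θ : Finset Formula} :
      GD Γ G A (Δ ∪ {(B.imp C).neg}) Θ → GD Γ G A (Δ ∪ {B, C.neg}) Θ
  | cDisjE1 {A B C : Formula} {Δ Θ : Finset Formula} :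
      GD Γ G A (Δ ∪ {B.disj C}) Θ → GD Γ G A (Δ ∪ {B}) Θ
  | cDisjE2 {A B C : Formula} {Δ Θ : Finset Formula} :
      GD Γ G A (Δ ∪ {B.disj C}) Θ → GD Γ G A (Δ ∪ {C}) Θ
  | cNegDisjE {A B C : Formula} {Δ Θ : Finset Formula} :
      GD Γ G A (Δ ∪ {(B.disj C).neg}) Θ → GD Γ G A (Δ ∪ {B.neg, C.neg}) Θ
  | cConjE {A B C : Formula} {Δ Θ : Finset Formula} :
      GD Γ G A (Δ ∪ {B.conj C}) Θ → GD Γ G A (Δ ∪ {B, C}) Θ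
  | cNegConjE1 {A B C : Formula} {Δ Θ : Finset Formula} :
      GD Γ G A (Δ ∪ {(B.conj C).neg}) Θ → GD Γ G A (Δ ∪ {B.neg}) Θ
  | cNegConjE2 {A B C : Formula} {Δ Θ : Finset Formula} :
      GD Γ G A (Δ ∪ {(B.conj C).neg}) Θ → GD Γ G A (Δ ∪ {C.neg}) Θ
  | cEquivE1 {A B C : Formula} {Δ Θ : Finset Formula} :
      GD Γ G A (Δ ∪ {B.equiv C}) Θ → GD Γ G A (Δ ∪ {B, C}) Θ
  | cEquivE2 {A B C : Formula} {Δ Θ : Finset Formula} :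
      GD Γ G A (Δ ∪ {B.equiv C}) Θ → GD Γ G A (Δ ∪ {B.neg, C.neg}) Θ
  | cNegEquivE1 {A B C : Formula} {Δ Θ : Finset Formula} :
      GD Γ G A (Δ ∪ {(B.equiv C).neg}) Θ → GD Γ G A (Δ ∪ {B.neg, C}) Θ
  | cNegEquivE2 {A B C : Formula} {Δ Θ : Finset Formula} :
      GD Γ G A (Δ ∪ {(B.equiv C).neg}) Θ → GD Γ G A (Δ ∪ {B, C.neg}) Θ
  | cPnegE {A B : Formula} {Δ Θ : Finset Formula} :
      GD Γ G A (Δ ∪ {B.pneg}) Θ → GD Γ G A (Δ ∪ {B.neg}) Θ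
  | cNegPnegE {A B : Formula} {Δ Θ : Finset Formula} :
      GD Γ G A (Δ ∪ {B.pneg.neg}) Θ → GD Γ G A (Δ ∪ {B}) (Θ ∪ {B.conj B.pneg})
  | cNegNegE {A B : Formula} {Δ Θ : Finset Formula} :
      GD Γ G A (Δ ∪ {B.neg.neg}) Θ → GD Γ G A (Δ ∪ {B}) Θ
  -- Trans, EM, EM0, IC
  | trans {A B : Formula} {Δ Δ' Θ Θ' : Finset Formula} :
      GD Γ G A (Δ ∪ {B}) Θ → GD Γ G B Δ' Θ' → GD Γ G A (Δ ∪ Δ') (Θ ∪ Θ')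
  | em {A B : Formula} {Δ Δ' Θ Θ' : Finset Formula} :
      GD Γ G A (Δ ∪ {B}) Θ → GD Γ G A (Δ' ∪ {B.neg}) Θ' →
      GD Γ G A (Δ ∪ Δ') (Θ ∪ Θ')
  | em0 {A : Formula} {Δ Θ : Finset Formula} :
      GD Γ G A (Δ ∪ {A.neg}) Θ → GD Γ G A Δ Θ
  | ic {Λ Λ' Δ Θ : Finset Formula} :
      (Λ ∪ Λ').Nonempty → ↑Λ ⊆ Omega → ↑Λ' ⊆ Omega →
      GD Γ G (Dab (Λ ∪ Λ')) Δ (Θ ∪ Λ') → GD Γ G (Dab (Λ ∪ Λ')) Δ Θ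

namespace Deriv

variable {cl : Bool} {Γ : Set Formula} {A B C D : Formula}

theorem weaken {Γ' : Set Formula} (h : Deriv cl Γ A) (hs : Γ ⊆ Γ') : Deriv cl Γ' A := by
  induction h with
  | prem h => exact prem (hs h)
  | mp _ _ ih1 ih2 => exact mp ih1 ih2
  | axCL A B h => exact axCL A B h
  | axK => exact axK _ _
  | axS => exact axS _ _ _
  | axPeirce => exact axPeirce _ _
  | axAndElimL => exact axAndElimL _ _
  | axAndElimR => exact axAndElimR _ _
  | axAndIntro => exact axAndIntro _ _
  | axOrIntroL => exact axOrIntroL _ _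
  | axOrIntroR => exact axOrIntroR _ _
  | axOrElim => exact axOrElim _ _ _
  | axIffElimL => exact axIffElimL _ _
  | axIffElimR => exact axIffElimR _ _
  | axIffIntro => exact axIffIntro _ _
  | axBot => exact axBot _
  | axEM => exact axEM _

theorem impId : Deriv cl Γ (A.imp A) :=
  mp (mp (axS A (A.imp A) A) (axK A (A.imp A))) (axK A A)

theorem impI (h : Deriv cl (insert A Γ) B) : Deriv cl Γ (A.imp B) := by
  generalize hΓ : insert A Γ = Γ' at h
  induction h with
  | prem hm =>
      subst hΓ
      rcases hm with rfl | hm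
      · exact impId
      · exact mp (axK _ _) (prem hm)
  | mp _ _ ih1 ih2 => exact mp (mp (axS _ _ _) ih1) ih2
  | axCL A B h => exact mp (axK _ _) (axCL A B h)
  | axK => exact mp (axK _ _) (axK _ _)
  | axS => exact mp (axK _ _) (axS _ _ _)
  | axPeirce => exact mp (axK _ _) (axPeirce _ _)
  | axAndElimL => exact mp (axK _ _) (axAndElimL _ _)
  | axAndElimR => exact mp (axK _ _) (axAndElimR _ _)
  | axAndIntro => exact mp (axK _ _) (axAndIntro _ _)
  | axOrIntroL => exact mp (axK _ _) (axOrIntroL _ _)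
  | axOrIntroR => exact mp (axK _ _) (axOrIntroR _ _)
  | axOrElim => exact mp (axK _ _) (axOrElim _ _ _)
  | axIffElimL => exact mp (axK _ _) (axIffElimL _ _)
  | axIffElimR => exact mp (axK _ _) (axIffElimR _ _)
  | axIffIntro => exact mp (axK _ _) (axIffIntro _ _)
  | axBot => exact mp (axK _ _) (axBot _)
  | axEM => exact mp (axK _ _) (axEM _)

theorem w (h : Deriv cl Γ B) : Deriv cl (insert A Γ) B := weaken h (Set.subset_insert _ _)

theorem h0 : Deriv cl (insert A Γ) A := prem (Set.mem_insert _ _)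

theorem botE (h : Deriv cl Γ Formula.bot) : Deriv cl Γ A := mp (axBot A) h

theorem negE (h1 : Deriv cl Γ A.neg) (h2 : Deriv cl Γ A) : Deriv cl Γ B := botE (mp h1 h2)

theorem negI (h : Deriv cl (insert A Γ) Formula.bot) : Deriv cl Γ A.neg := impI h

theorem byContra (h : Deriv cl (insert A.neg Γ) Formula.bot) : Deriv cl Γ A :=
  mp (axPeirce A Formula.bot) (impI (botE h))

theorem lem : Deriv cl Γ (A.disj A.neg) := by
  apply byContra
  exact mp h0 (mp (axOrIntroR A A.neg) (negI (mp (w h0) (mp (axOrIntroL A A.neg) h0))))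

theorem orE (h : Deriv cl Γ (A.disj B)) (h1 : Deriv cl (insert A Γ) C)
    (h2 : Deriv cl (insert B Γ) C) : Deriv cl Γ C :=
  mp (mp (mp (axOrElim A B C) (impI h1)) (impI h2)) h

theorem byCases (h1 : Deriv cl (insert A Γ) C) (h2 : Deriv cl (insert A.neg Γ) C) :
    Deriv cl Γ C := orE lem h1 h2

theorem orL (h : Deriv cl Γ A) : Deriv cl Γ (A.disj B) := mp (axOrIntroL A B) h
theorem orR (h : Deriv cl Γ B) : Deriv cl Γ (A.disj B) := mp (axOrIntroR A B) h
theorem andI (h1 : Deriv cl Γ A) (h2 : Deriv cl Γ B) : Deriv cl Γ (A.conj B) :=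
  mp (mp (axAndIntro A B) h1) h2
theorem andE1 (h : Deriv cl Γ (A.conj B)) : Deriv cl Γ A := mp (axAndElimL A B) h
theorem andE2 (h : Deriv cl Γ (A.conj B)) : Deriv cl Γ B := mp (axAndElimR A B) h

theorem impT (h1 : Deriv cl Γ (A.imp B)) (h2 : Deriv cl Γ (B.imp C)) :
    Deriv cl Γ (A.imp C) := impI (mp (w h2) (mp (w h1) h0))

theorem orMono (h : Deriv cl Γ (A.disj B)) (h1 : Deriv cl Γ (A.imp C))
    (h2 : Deriv cl Γ (B.imp D)) : Deriv cl Γ (C.disj D) :=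
  orE h (orL (mp (w h1) h0)) (orR (mp (w h2) h0))

theorem ofImp (h : Deriv cl Γ (A.imp B)) : Deriv cl (insert A Γ) B := mp (w h) h0

end Deriv

section Disj
open Deriv

variable {cl : Bool} {Γ : Set Formula} {A C : Formula}

theorem listDisj_intro {l : List Formula} (h : A ∈ l) :
    Deriv cl Γ (A.imp (listDisj l)) := by
  induction l with
  | nil => cases h
  | cons B rest ih =>
      cases rest with
      | nil =>
          rcases List.mem_cons.1 h with rfl | h
          · exact impId
          · simp at h
      | cons E rest' =>
          rcases List.mem_cons.1 h with rfl | h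
          · exact axOrIntroL _ _
          · exact impT (ih h) (axOrIntroR _ _)

theorem listDisj_elim {l : List Formula} (h : ∀ A ∈ l, Deriv cl Γ (A.imp C)) :
    Deriv cl Γ ((listDisj l).imp C) := by
  induction l with
  | nil => exact axBot C
  | cons B rest ih =>
      cases rest with
      | nil => exact h B (by simp)
      | cons E rest' =>
          exact mp (mp (axOrElim _ _ _) (h B (by simp)))
            (ih (fun A hA => h A (by simp [hA])))

theorem Dab_intro {Θ : Finset Formula} (h : A ∈ Θ) :
    Deriv cl Γ (A.imp (Dab Θ)) :=
  listDisj_intro ((Finset.mem_sort _).2 h)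

theorem Dab_elim {Θ : Finset Formula} (h : ∀ A ∈ Θ, Deriv cl Γ (A.imp C)) :
    Deriv cl Γ ((Dab Θ).imp C) :=
  listDisj_elim (fun A hA => h A ((Finset.mem_sort _).1 hA))

theorem Dab_mono {Θ Θ' : Finset Formula} (h : Θ ⊆ Θ') :
    Deriv cl Γ ((Dab Θ).imp (Dab Θ')) :=
  Dab_elim (fun A hA => Dab_intro (h hA))

theorem Dab_empty : Dab ∅ = Formula.bot := by
  simp [Dab, listDisj]

end Disj
namespace Deriv

variable {cl : Bool} {Γ : Set Formula} {A B C X X' Y Y' : Formula}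

theorem orMonoI (h1 : Deriv cl Γ (X.imp X')) (h2 : Deriv cl Γ (Y.imp Y')) :
    Deriv cl Γ ((X.disj Y).imp (X'.disj Y')) := impI (orMono h0 (w h1) (w h2))

theorem lImpE2 (hnB : Deriv cl Γ B.neg) : Deriv cl Γ ((A.imp B).imp A.neg) :=
  impI (negI (mp (w (w hnB)) (mp (w h0) h0)))

theorem lNegImp1 : Deriv cl Γ ((A.imp B).neg.imp A) :=
  impI (byContra (mp (w h0) (impI (botE (mp (w h0) h0)))))

theorem lNegImp2 : Deriv cl Γ ((A.imp B).neg.imp B.neg) :=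
  impI (negI (mp (w h0) (mp (axK B A) h0)))

theorem lDisj1 (hnB : Deriv cl Γ B.neg) : Deriv cl Γ ((A.disj B).imp A) :=
  impI (orE h0 h0 (negE (w (w hnB)) h0))

theorem lDisj2 (hnA : Deriv cl Γ A.neg) : Deriv cl Γ ((A.disj B).imp B) :=
  impI (orE h0 (negE (w (w hnA)) h0) h0)

theorem lNegDisj1 : Deriv cl Γ ((A.disj B).neg.imp A.neg) :=
  impI (negI (mp (w h0) (orL h0)))

theorem lNegDisj2 : Deriv cl Γ ((A.disj B).neg.imp B.neg) :=
  impI (negI (mp (w h0) (orR h0)))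

theorem lNegConj : Deriv cl Γ ((A.conj B).neg.imp (A.neg.disj B.neg)) :=
  impI (byCases (byCases (botE (mp (w (w h0)) (andI (w h0) h0))) (orR h0)) (orL h0))

theorem lNegEquiv1 : Deriv cl Γ ((A.equiv B).neg.imp (A.disj B)) :=
  impI (byCases (orL h0) (byCases (orR h0)
    (botE (mp (w (w h0)) (mp (mp (axIffIntro A B) (impI (negE (w (w h0)) h0)))
      (impI (negE (w h0) h0)))))))

theorem lNegEquiv2 : Deriv cl Γ ((A.equiv B).neg.imp (A.neg.disj B.neg)) :=
  impI (byCases (byCases (botE (mp (w (w h0)) (mp (mp (axIffIntro A B)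
    (mp (axK B A) h0)) (mp (axK A B) (w h0))))) (orR h0)) (orL h0))

theorem lPneg : Deriv cl Γ (A.pneg.imp (A.neg.disj (A.conj A.pneg))) :=
  impI (byCases (orR (andI h0 (w h0))) (orL h0))

theorem lNegPneg : Deriv cl Γ (A.pneg.neg.imp A) :=
  impI (orE (axEM A) h0 (botE (mp (w h0) h0)))

theorem lDNE : Deriv cl Γ (A.neg.neg.imp A) :=
  impI (byContra (mp (w h0) h0))

theorem lNegPnegI : Deriv cl Γ (A.neg.imp A.pneg) :=
  impI (orE (axEM A) (negE (w h0) h0) h0)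

theorem lNegImpI (hB : Deriv cl Γ B) (hnC : Deriv cl Γ C.neg) :
    Deriv cl Γ (B.imp C).neg :=
  negI (mp (w hnC) (mp h0 (w hB)))

theorem lNegDisjI (hnB : Deriv cl Γ B.neg) (hnC : Deriv cl Γ C.neg) :
    Deriv cl Γ (B.disj C).neg :=
  negI (orE h0 (mp (w (w hnB)) h0) (mp (w (w hnC)) h0))

theorem lNegConjI1 (hnB : Deriv cl Γ B.neg) : Deriv cl Γ (B.conj C).neg :=
  negI (mp (w hnB) (andE1 h0))

theorem lNegConjI2 (hnC : Deriv cl Γ C.neg) : Deriv cl Γ (B.conj C).neg :=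
  negI (mp (w hnC) (andE2 h0))

theorem lEquivI1 (hB : Deriv cl Γ B) (hC : Deriv cl Γ C) : Deriv cl Γ (B.equiv C) :=
  mp (mp (axIffIntro B C) (mp (axK C B) hC)) (mp (axK B C) hB)

theorem lEquivI2 (hnB : Deriv cl Γ B.neg) (hnC : Deriv cl Γ C.neg) :
    Deriv cl Γ (B.equiv C) :=
  mp (mp (axIffIntro B C) (impI (negE (w hnB) h0))) (impI (negE (w hnC) h0))

theorem lNegEquivI1 (hnB : Deriv cl Γ B.neg) (hC : Deriv cl Γ C) :
    Deriv cl Γ (B.equiv C).neg :=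
  negI (mp (w hnB) (mp (mp (axIffElimR B C) h0) (w hC)))

theorem lNegEquivI2 (hB : Deriv cl Γ B) (hnC : Deriv cl Γ C.neg) :
    Deriv cl Γ (B.equiv C).neg :=
  negI (mp (w hnC) (mp (mp (axIffElimL B C) h0) (w hB)))

theorem lNegNegI : Deriv cl Γ (B.imp B.neg.neg) :=
  impI (negI (mp h0 (w h0)))

end Deriv

theorem ctx1 (Γ : Set Formula) (Δ : Finset Formula) (X : Formula) :
    (Γ ∪ ↑(Δ ∪ {X}) : Set Formula) = insert X (Γ ∪ ↑Δ) := by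
  ext a; simp [Finset.coe_union]

theorem ctx2 (Γ : Set Formula) (Δ : Finset Formula) (X Y : Formula) :
    (Γ ∪ ↑(Δ ∪ {X, Y}) : Set Formula) = insert X (insert Y (Γ ∪ ↑Δ)) := by
  ext a; simp [Finset.coe_union]

theorem ctxU (Γ : Set Formula) (Δ Δ' : Finset Formula) :
    (Γ ∪ ↑Δ : Set Formula) ⊆ Γ ∪ ↑(Δ ∪ Δ') := by
  intro a ha; simp [Finset.coe_union] at ha ⊢; tauto

theorem ctxU' (Γ : Set Formula) (Δ Δ' : Finset Formula) :
    (Γ ∪ ↑Δ' : Set Formula) ⊆ Γ ∪ ↑(Δ ∪ Δ') := by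
  intro a ha; simp [Finset.coe_union] at ha ⊢; tauto

open Deriv

/-- Soundness of the goal-directed proof system: if the line A_{Δ,Θ} occurs in a
goal-directed proof from Γ with main goal G, then Γ ∪ Δ ⊢_CLuN A ∨ Dab(Θ). -/
theorem gd_sound (Γ : Set Formula) (G A : Formula) (Δ Θ : Finset Formula)
    (h : GD Γ G A Δ Θ) : CLuN (Γ ∪ ↑Δ) (A.disj (Dab Θ)) := by
  induction h with
  | prem hA => exact orL (Deriv.prem (Set.mem_union_left _ hA))
  | goal => exact orL (Deriv.prem (by simp))
  | agoal h1 h2 => exact orL (Deriv.prem (by simp))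
  | efq hA => exact negE (Deriv.prem (by simp)) (Deriv.prem (Set.mem_union_left _ hA))
  | impE1 h ih =>
      rw [ctx1]
      exact orMono (w ih) (impI (mp h0 (w h0))) impId
  | impE2 h ih => rw [ctx1]; exact orMono (w ih) (lImpE2 h0) impId
  | negImpE1 h ih => exact orMono ih lNegImp1 impId
  | negImpE2 h ih => exact orMono ih lNegImp2 impId
  | disjE1 h ih => rw [ctx1]; exact orMono (w ih) (lDisj1 h0) impId
  | disjE2 h ih => rw [ctx1]; exact orMono (w ih) (lDisj2 h0) impId
  | negDisjE1 h ih => exact orMono ih lNegDisj1 impId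
  | negDisjE2 h ih => exact orMono ih lNegDisj2 impId
  | conjE1 h ih => exact orMono ih (axAndElimL _ _) impId
  | conjE2 h ih => exact orMono ih (axAndElimR _ _) impId
  | negConjE h ih => exact orMono ih lNegConj impId
  | equivE1 h ih => exact orMono ih (axIffElimL _ _) impId
  | equivE2 h ih => exact orMono ih (axIffElimR _ _) impId
  | negEquivE1 h ih => exact orMono ih lNegEquiv1 impId
  | negEquivE2 h ih => exact orMono ih lNegEquiv2 impId
  | pnegE h ih =>
      refine orE ih ?_ (orR (mp (Dab_mono Finset.subset_union_left) h0))
      exact orMono (mp lPneg h0) impId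
        (Dab_intro (Finset.mem_union_right _ (Finset.mem_singleton_self _)))
  | negPnegE h ih => exact orMono ih lNegPneg impId
  | negNegE h ih => exact orMono ih lDNE impId
  | cImpE1 h ih =>
      rw [ctx1] at ih ⊢
      exact mp (w (impI ih)) (impI (botE (mp (w h0) h0)))
  | cImpE2 h ih => rw [ctx1] at ih ⊢; exact mp (w (impI ih)) (mp (axK _ _) h0)
  | cNegImpE h ih =>
      rw [ctx1] at ih; rw [ctx2]
      exact mp (w (w (impI ih))) (lNegImpI h0 (w h0))
  | cDisjE1 h ih => rw [ctx1] at ih ⊢; exact mp (w (impI ih)) (orL h0)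
  | cDisjE2 h ih => rw [ctx1] at ih ⊢; exact mp (w (impI ih)) (orR h0)
  | cNegDisjE h ih =>
      rw [ctx1] at ih; rw [ctx2]
      exact mp (w (w (impI ih))) (lNegDisjI h0 (w h0))
  | cConjE h ih =>
      rw [ctx1] at ih; rw [ctx2]
      exact mp (w (w (impI ih))) (andI h0 (w h0))
  | cNegConjE1 h ih => rw [ctx1] at ih ⊢; exact mp (w (impI ih)) (lNegConjI1 h0)
  | cNegConjE2 h ih => rw [ctx1] at ih ⊢; exact mp (w (impI ih)) (lNegConjI2 h0)
  | cEquivE1 h ih =>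
      rw [ctx1] at ih; rw [ctx2]
      exact mp (w (w (impI ih))) (lEquivI1 h0 (w h0))
  | cEquivE2 h ih =>
      rw [ctx1] at ih; rw [ctx2]
      exact mp (w (w (impI ih))) (lEquivI2 h0 (w h0))
  | cNegEquivE1 h ih =>
      rw [ctx1] at ih; rw [ctx2]
      exact mp (w (w (impI ih))) (lNegEquivI1 h0 (w h0))
  | cNegEquivE2 h ih =>
      rw [ctx1] at ih; rw [ctx2]
      exact mp (w (w (impI ih))) (lNegEquivI2 h0 (w h0))
  | cPnegE h ih => rw [ctx1] at ih ⊢; exact mp (w (impI ih)) (mp lNegPnegI h0)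
  | cNegPnegE h ih =>
      rw [ctx1] at ih ⊢
      exact byCases
        (orR (mp (Dab_intro (Finset.mem_union_right _ (Finset.mem_singleton_self _))) (andI (w h0) h0)))
        (orMono (mp (w (w (impI ih))) h0) impId (Dab_mono Finset.subset_union_left))
  | cNegNegE h ih => rw [ctx1] at ih ⊢; exact mp (w (impI ih)) (mp lNegNegI h0)
  | trans h1 h2 ih1 ih2 =>
      rw [ctx1] at ih1
      refine orE (weaken ih2 (ctxU' _ _ _)) ?_ ?_
      · exact orMono (mp (w (weaken (impI ih1) (ctxU _ _ _))) h0) impId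
          (Dab_mono Finset.subset_union_left)
      · exact orR (mp (Dab_mono Finset.subset_union_right) h0)
  | @em A' B' Δ1 Δ2 Θ1 Θ2 h1 h2 ih1 ih2 =>
      rw [ctx1] at ih1 ih2
      refine byCases (A := B') ?_ ?_
      · exact orMono (mp (w (weaken (impI ih1) (ctxU _ _ _))) h0) impId
          (Dab_mono Finset.subset_union_left)
      · exact orMono (mp (w (weaken (impI ih2) (ctxU' _ _ _))) h0) impId
          (Dab_mono Finset.subset_union_right)
  | em0 h ih =>
      rw [ctx1] at ih
      exact byCases (orL h0) ih
  | ic hne hΛ hΛ' h ih =>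
      refine orE ih (orL h0) ?_
      refine mp (Dab_elim fun F hF => ?_) h0
      rcases Finset.mem_union.1 hF with hF | hF
      · exact impT (Dab_intro hF) (axOrIntroR _ _)
      · exact impT (Dab_intro (Finset.mem_union_right _ hF)) (axOrIntroL _ _)
end
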